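/- Let M be a complete connected Riemannian manifold, f : M → ℝ a 1-Lipschitz function, γ a transport line (a transport curve defined on all of ℝ, hence a complete minimizing geodesic) of f, and x a point on γ. Then for any y ∈ M, y lies on γ if and only if |f(y) - f(x)| = d(x, y). -/
import Mathlib


/- STATEMENT 1: If γ is a transport line of a 1-Lipschitz function f on a complete
connected Riemannian manifold M (encoded metrically; the hypothesis `hnb` is the
non-branching property of minimizing geodesics in complete Riemannian manifolds:
two points lying beyond x on globally minimizing configurations through x at equal
distance coincide), and x lies on γ, then for any y ∈ M:
y lies on γ iff |f(y) - f(x)| = d(x,y). -/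
theorem mem_transport_line_iff
    {M : Type*} [MetricSpace M] [CompleteSpace M] [ConnectedSpace M]
    (hnb : ∀ a x b c : M, dist a b = dist a x + dist x b →
      dist a c = dist a x + dist x c → dist x b = dist x c → 0 < dist a x → b = c)
    (f : M → ℝ) (hf : LipschitzWith 1 f)
    (γ : ℝ → M)
    (hgeo : ∀ s t : ℝ, dist (γ s) (γ t) = |s - t|)
    (htrans : ∀ s t : ℝ, f (γ t) - f (γ s) = t - s)
    (t₀ : ℝ) (x : M) (hx : γ t₀ = x) :
    ∀ y : M, (∃ t : ℝ, γ t = y) ↔ |f y - f x| = dist x y := by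
  subst hx
  intro y
  constructor
  · rintro ⟨t, rfl⟩
    rw [htrans, hgeo, abs_sub_comm]
  · intro h
    have hr : (0:ℝ) ≤ dist (γ t₀) y := dist_nonneg
    rcases abs_cases (f y - f (γ t₀)) with ⟨he, _⟩ | ⟨he, _⟩
    · -- f y - f (γ t₀) = dist (γ t₀) y
      have hry : f y - f (γ t₀) = dist (γ t₀) y := by rw [← he, h]
      set r := dist (γ t₀) y with hrdef
      have lip : dist (f (γ (t₀ - 1))) (f y) ≤ dist (γ (t₀ - 1)) y := by
        simpa using hf.dist_le_mul (γ (t₀ - 1)) y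
      have hd1 : dist (γ (t₀ - 1)) (γ t₀) = 1 := by rw [hgeo]; norm_num
      have hfy : f y - f (γ (t₀ - 1)) = r + 1 := by
        have := htrans (t₀ - 1) t₀
        linarith
      have hge : r + 1 ≤ dist (γ (t₀ - 1)) y := by
        rw [Real.dist_eq] at lip
        calc r + 1 = f y - f (γ (t₀ - 1)) := hfy.symm
          _ ≤ |f (γ (t₀ - 1)) - f y| := by rw [abs_sub_comm]; exact le_abs_self _
          _ ≤ _ := lip
      have hle : dist (γ (t₀ - 1)) y ≤ 1 + r := by
        calc dist (γ (t₀ - 1)) y ≤ dist (γ (t₀ - 1)) (γ t₀) + dist (γ t₀) y :=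
              dist_triangle _ _ _
          _ = 1 + r := by rw [hd1]
      have hdac : dist (γ (t₀ - 1)) y = 1 + r := le_antisymm hle (by linarith)
      refine ⟨t₀ + r, hnb (γ (t₀ - 1)) (γ t₀) (γ (t₀ + r)) y ?_ ?_ ?_ ?_⟩
      · rw [hgeo, hgeo, hgeo,
          abs_of_nonpos (by linarith), abs_of_nonpos (by linarith),
          abs_of_nonpos (by linarith)]
        ring
      · rw [hdac, hd1]
      · rw [hgeo, abs_of_nonpos (by linarith)]
        ring
      · rw [hd1]; norm_num
    · -- f y - f (γ t₀) = -dist (γ t₀) y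
      have hry : f (γ t₀) - f y = dist (γ t₀) y := by rw [← h, he]; ring
      set r := dist (γ t₀) y with hrdef
      have lip : dist (f (γ (t₀ + 1))) (f y) ≤ dist (γ (t₀ + 1)) y := by
        simpa using hf.dist_le_mul (γ (t₀ + 1)) y
      have hd1 : dist (γ (t₀ + 1)) (γ t₀) = 1 := by rw [hgeo]; norm_num
      have hfy : f (γ (t₀ + 1)) - f y = r + 1 := by
        have := htrans t₀ (t₀ + 1)
        linarith
      have hge : r + 1 ≤ dist (γ (t₀ + 1)) y := by
        rw [Real.dist_eq] at lip
        calc r + 1 = f (γ (t₀ + 1)) - f y := hfy.symm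
          _ ≤ |f (γ (t₀ + 1)) - f y| := le_abs_self _
          _ ≤ _ := lip
      have hle : dist (γ (t₀ + 1)) y ≤ 1 + r := by
        calc dist (γ (t₀ + 1)) y ≤ dist (γ (t₀ + 1)) (γ t₀) + dist (γ t₀) y :=
              dist_triangle _ _ _
          _ = 1 + r := by rw [hd1]
      have hdac : dist (γ (t₀ + 1)) y = 1 + r := le_antisymm hle (by linarith)
      refine ⟨t₀ - r, hnb (γ (t₀ + 1)) (γ t₀) (γ (t₀ - r)) y ?_ ?_ ?_ ?_⟩
      · rw [hgeo, hgeo, hgeo,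
          abs_of_nonneg (by linarith), abs_of_nonneg (by linarith),
          abs_of_nonneg (by linarith)]
        ring
      · rw [hdac, hd1]
      · rw [hgeo, abs_of_nonneg (by linarith)]
        ring
      · rw [hd1]; norm_num
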